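/- Assume Π_A satisfies energy-band thermalization in the shell S (of cardinality d ≥ 1) with bandwidth ΔE > 0 and accuracy ε > 0. Let S' ⊆ S be a subset such that |E q − E r| < ΔE for all q, r ∈ S', and let ρ be a state supported on the span of {e q : q ∈ S'}. Then |Tr(ρ Π_A) − ⟨Π_A⟩_S| < ε · √(d · Tr(ρ²)). -/

import Mathlib

open MeasureTheory Filter
open scoped ComplexOrder

namespace QET

variable {D : ℕ}

/-- `exp(-itH)` for the Hamiltonian `H = Σ_n (E n) • P_n`, where `P_n` is the orthogonal
projection onto the `n`-th vector of the fixed orthonormal eigenbasis `e`.  All operators are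
written as matrices in this eigenbasis, so `H` is diagonal and
`exp(-itH) = diag (exp (-i t E n))`. -/
noncomputable def U (E : Fin D → ℝ) (t : ℝ) : Matrix (Fin D) (Fin D) ℂ :=
  Matrix.diagonal fun n => Complex.exp (-(Complex.I) * t * (E n))

/-- Time evolution `X(t) = exp(-itH) · X · exp(itH)`. -/
noncomputable def evolve (E : Fin D → ℝ) (t : ℝ) (X : Matrix (Fin D) (Fin D) ℂ) :
    Matrix (Fin D) (Fin D) ℂ :=
  U E t * X * U E (-t)

/-- A state: a positive semidefinite operator with unit trace. -/
def IsState (ρ : Matrix (Fin D) (Fin D) ℂ) : Prop :=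
  ρ.PosSemidef ∧ ρ.trace = 1

/-- An observable: an orthogonal projection (Hermitian idempotent). -/
def IsObservable (P : Matrix (Fin D) (Fin D) ℂ) : Prop :=
  P.IsHermitian ∧ P * P = P

/-- Orthogonal projection `Π_S` onto the energy shell spanned by `{e n : n ∈ S}`. -/
noncomputable def shellProj (S : Finset (Fin D)) : Matrix (Fin D) (Fin D) ℂ :=
  Matrix.diagonal fun n => if n ∈ S then 1 else 0

/-- A state is supported on the shell of `S`: `Π_S ρ Π_S = ρ`. -/
def SupportedOn (S : Finset (Fin D)) (ρ : Matrix (Fin D) (Fin D) ℂ) : Prop :=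
  shellProj S * ρ * shellProj S = ρ

/-- Thermal value `⟨P⟩_S = Tr(P Π_S)/d` (a real number: trace of Hermitian products below). -/
noncomputable def thermVal (S : Finset (Fin D)) (P : Matrix (Fin D) (Fin D) ℂ) : ℝ :=
  (P * shellProj S).trace.re / S.card

/-- Fourier transform `w̃(E) = ∫ w(t) exp(-iEt) dt` of a weight function. -/
noncomputable def fourier (w : ℝ → ℝ) (En : ℝ) : ℂ :=
  ∫ t : ℝ, (w t : ℂ) * Complex.exp (-(Complex.I) * En * t)

/-- A weight function: integrable, nonnegative, normalized to `∫ w = 1`. -/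
structure IsWeight (w : ℝ → ℝ) : Prop where
  integrable : Integrable w
  nonneg : ∀ t, 0 ≤ w t
  normalized : (∫ t : ℝ, w t) = 1

/-- A completely positive weight: a weight function whose Fourier transform is a
nonnegative real number everywhere. -/
structure IsCPWeight (w : ℝ → ℝ) extends IsWeight w : Prop where
  fourier_im : ∀ En : ℝ, (fourier w En).im = 0
  fourier_nonneg : ∀ En : ℝ, 0 ≤ (fourier w En).re

/-- The matrix element `⟨e n, (P - ⟨P⟩_S · 1) e m⟩ = ⟨e n, P e m⟩ - ⟨P⟩_S δ_{nm}`. -/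
noncomputable def devEl (S : Finset (Fin D)) (P : Matrix (Fin D) (Fin D) ℂ)
    (n m : Fin D) : ℂ :=
  P n m - if n = m then (thermVal S P : ℂ) else 0

/-- Band variance `Σ_{n,m ∈ S, |E n - E m| < ΔE} |⟨e n, P e m⟩ - ⟨P⟩_S δ_{nm}|²`. -/
noncomputable def bandVar (S : Finset (Fin D)) (E : Fin D → ℝ) (ΔE : ℝ)
    (P : Matrix (Fin D) (Fin D) ℂ) : ℝ :=
  ∑ n ∈ S, ∑ m ∈ S,
    if |E n - E m| < ΔE then ‖devEl S P n m‖ ^ 2 else 0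

/-- Energy-band thermalization in the shell `S` with bandwidth `ΔE` and accuracy `ε`. -/
def EnergyBandTherm (S : Finset (Fin D)) (E : Fin D → ℝ) (ΔE ε : ℝ)
    (P : Matrix (Fin D) (Fin D) ℂ) : Prop :=
  (1 / (S.card : ℝ)) * bandVar S E ΔE P < ε ^ 2

/-- Expectation value `⟨v, P v⟩` of an operator in a vector. -/
noncomputable def expVal (P : Matrix (Fin D) (Fin D) ℂ) (v : Fin D → ℂ) : ℂ :=
  dotProduct (star v) (P.mulVec v)

/-- **Instantaneous thermal equilibrium in small energy shells (state version).**
If `Π_A` satisfies energy-band thermalization in the shell `S` (of cardinality `d ≥ 1`)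
with bandwidth `ΔE > 0` and accuracy `ε > 0`, `S' ⊆ S` has all level spacings within the
band (`|E q - E r| < ΔE` for all `q, r ∈ S'`), and `ρ` is a state supported on the span of
`{e q : q ∈ S'}`, then `|Tr(ρ Π_A) - ⟨Π_A⟩_S| < ε · √(d · Tr ρ²)`. -/
theorem instantaneous_thermal_equilibrium_in_small_shell
    {D : ℕ} (hD : 0 < D) (E : Fin D → ℝ)
    (S : Finset (Fin D)) (hd : 1 ≤ S.card)
    (PiA : Matrix (Fin D) (Fin D) ℂ) (hPiA : IsObservable PiA)
    (ΔE ε : ℝ) (hΔE : 0 < ΔE) (hε : 0 < ε)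
    (hEBT : EnergyBandTherm S E ΔE ε PiA)
    (S' : Finset (Fin D)) (hS'S : S' ⊆ S)
    (hnarrow : ∀ q ∈ S', ∀ r ∈ S', |E q - E r| < ΔE)
    (ρ : Matrix (Fin D) (Fin D) ℂ) (hρ : IsState ρ) (hsupp : SupportedOn S' ρ) :
    ‖(ρ * PiA).trace - (thermVal S PiA : ℂ)‖
      < ε * Real.sqrt (S.card * (ρ * ρ).trace.re) := by
  classical
  obtain ⟨hpos, htr⟩ := hρ
  have hherm : ρ.IsHermitian := hpos.1
  have hcard : (0:ℝ) < (S.card : ℝ) := by exact_mod_cast hd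
  set c : ℝ := thermVal S PiA with hc
  -- ρ vanishes outside S' × S'
  have hzero : ∀ n m : Fin D, n ∉ S' ∨ m ∉ S' → ρ n m = 0 := by
    intro n m h
    have h1 := congrFun (congrFun hsupp n) m
    simp only [shellProj, Matrix.mul_diagonal, Matrix.diagonal_mul] at h1
    rcases h with h | h <;> simp [h] at h1 <;> exact h1.symm
  -- trace identity
  have hTrEq : (ρ * PiA).trace - (c:ℂ) = ∑ n ∈ S', ∑ m ∈ S', ρ n m * devEl S PiA m n := by
    have h1 : (ρ * PiA).trace = ∑ n : Fin D, ∑ m : Fin D, ρ n m * PiA m n := by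
      simp [Matrix.trace, Matrix.mul_apply, Matrix.diag]
    have h2 : (c:ℂ) = ∑ n : Fin D, ρ n n * (c:ℂ) := by
      rw [← Finset.sum_mul]
      have : ∑ n : Fin D, ρ n n = 1 := by simpa [Matrix.trace, Matrix.diag] using htr
      rw [this, one_mul]
    have h3 : ∀ n : Fin D, ∑ m : Fin D, ρ n m * (if m = n then (c:ℂ) else 0) = ρ n n * c := by
      intro n
      rw [Finset.sum_eq_single n] <;> simp +contextual
    have h4 : ∑ n : Fin D, ∑ m : Fin D, ρ n m * devEl S PiA m n
        = (ρ * PiA).trace - (c:ℂ) := by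
      rw [h1]
      have : ∀ n m : Fin D, ρ n m * devEl S PiA m n
          = ρ n m * PiA m n - ρ n m * (if m = n then (c:ℂ) else 0) := by
        intro n m; simp [devEl, mul_sub, ← hc]
      simp only [this, Finset.sum_sub_distrib, h3]
      rw [← h2]
    rw [← h4]
    rw [show ∀ f : Fin D → ℂ, ∑ n : Fin D, f n = ∑ n ∈ Finset.univ, f n from fun _ => rfl]
    rw [← Finset.sum_subset (Finset.subset_univ S')]
    · apply Finset.sum_congr rfl
      intro n _
      rw [← Finset.sum_subset (Finset.subset_univ S')]
      intro m _ hm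
      rw [hzero n m (Or.inr hm), zero_mul]
    · intro n _ hn
      apply Finset.sum_eq_zero
      intro m _
      rw [hzero n m (Or.inl hn), zero_mul]
  -- abbreviations
  set A : ℝ := ∑ n ∈ S', ∑ m ∈ S', ‖ρ n m‖ ^ 2 with hA
  set B : ℝ := ∑ n ∈ S', ∑ m ∈ S', ‖devEl S PiA m n‖ ^ 2 with hB
  set T : ℝ := (ρ * ρ).trace.re with hT
  -- T equals sum of |ρ n m|^2
  have hTeq : T = ∑ n : Fin D, ∑ m : Fin D, ‖ρ n m‖ ^ 2 := by
    have key : (ρ * ρ).trace = ((∑ n : Fin D, ∑ m : Fin D, ‖ρ n m‖ ^ 2 : ℝ) : ℂ) := by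
      rw [Matrix.trace]
      push_cast
      refine Finset.sum_congr rfl fun n _ => ?_
      rw [Matrix.diag_apply, Matrix.mul_apply]
      refine Finset.sum_congr rfl fun m _ => ?_
      rw [← hherm.apply m n,
        show (star (ρ n m)) = (starRingEnd ℂ) (ρ n m) from rfl, Complex.mul_conj]
      push_cast [Complex.normSq_eq_norm_sq]
      norm_num
    rw [hT, key, Complex.ofReal_re]
  have habssq_nonneg : ∀ z : ℂ, (0:ℝ) ≤ ‖z‖ ^ 2 := fun z => sq_nonneg _
  -- A ≤ T
  have hAT : A ≤ T := by
    rw [hTeq, hA]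
    calc ∑ n ∈ S', ∑ m ∈ S', ‖ρ n m‖ ^ 2
        ≤ ∑ n ∈ S', ∑ m : Fin D, ‖ρ n m‖ ^ 2 :=
          Finset.sum_le_sum fun n _ =>
            Finset.sum_le_sum_of_subset_of_nonneg (Finset.subset_univ S')
              (fun m _ _ => habssq_nonneg _)
      _ ≤ ∑ n : Fin D, ∑ m : Fin D, ‖ρ n m‖ ^ 2 :=
          Finset.sum_le_sum_of_subset_of_nonneg (Finset.subset_univ S')
            (fun n _ _ => Finset.sum_nonneg fun m _ => habssq_nonneg _)
  -- B ≤ bandVar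
  have hBband : B ≤ bandVar S E ΔE PiA := by
    rw [hB, bandVar]
    rw [Finset.sum_comm]
    calc ∑ m ∈ S', ∑ n ∈ S', ‖devEl S PiA m n‖ ^ 2
        = ∑ m ∈ S', ∑ n ∈ S',
            (if |E m - E n| < ΔE then ‖devEl S PiA m n‖ ^ 2 else 0) := by
          apply Finset.sum_congr rfl; intro m hm
          apply Finset.sum_congr rfl; intro n hn
          rw [if_pos (hnarrow m hm n hn)]
      _ ≤ ∑ m ∈ S, ∑ n ∈ S,
            (if |E m - E n| < ΔE then ‖devEl S PiA m n‖ ^ 2 else 0) := by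
          apply le_trans
          · exact Finset.sum_le_sum fun m _ =>
              Finset.sum_le_sum_of_subset_of_nonneg hS'S
                (fun n _ _ => by positivity)
          · exact Finset.sum_le_sum_of_subset_of_nonneg hS'S
              (fun m _ _ => Finset.sum_nonneg fun n _ => by positivity)
  -- band variance bound
  have hband_nonneg : 0 ≤ bandVar S E ΔE PiA :=
    Finset.sum_nonneg fun n _ => Finset.sum_nonneg fun m _ => by positivity
  have hband_lt : bandVar S E ΔE PiA < ε ^ 2 * S.card := by
    have := hEBT
    rw [EnergyBandTherm, one_div, inv_mul_lt_iff₀ hcard] at this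
    linarith [this]
  -- T > 0
  have hTpos : 0 < T := by
    obtain ⟨n, hn⟩ : ∃ n : Fin D, ρ n n ≠ 0 := by
      by_contra h
      push_neg at h
      have : ρ.trace = 0 := by simp [Matrix.trace, Matrix.diag, h]
      rw [htr] at this; exact one_ne_zero this
    have h1 : (0:ℝ) < ‖ρ n n‖ ^ 2 := pow_pos (norm_pos_iff.mpr hn) 2
    have h2 : ‖ρ n n‖ ^ 2 ≤ ∑ m : Fin D, ‖ρ n m‖ ^ 2 :=
      Finset.single_le_sum (fun m _ => habssq_nonneg _) (Finset.mem_univ n)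
    have h3 : (∑ m : Fin D, ‖ρ n m‖ ^ 2)
        ≤ ∑ k : Fin D, ∑ m : Fin D, ‖ρ k m‖ ^ 2 :=
      Finset.single_le_sum (f := fun k => ∑ m : Fin D, ‖ρ k m‖ ^ 2)
        (fun k _ => Finset.sum_nonneg fun m _ => habssq_nonneg _)
        (Finset.mem_univ n)
    rw [hTeq]; linarith
  -- Cauchy–Schwarz
  set X : ℝ := ∑ p ∈ S' ×ˢ S', ‖ρ p.1 p.2‖ * ‖devEl S PiA p.2 p.1‖
    with hX
  have hXnonneg : 0 ≤ X := Finset.sum_nonneg fun p _ => by positivity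
  have hCS : X ^ 2 ≤ A * B := by
    have := Finset.sum_mul_sq_le_sq_mul_sq (S' ×ˢ S')
      (fun p => ‖ρ p.1 p.2‖) (fun p => ‖devEl S PiA p.2 p.1‖)
    rw [hX, hA, hB]
    rw [← Finset.sum_product' S' S' (fun n m => ‖ρ n m‖ ^ 2),
        ← Finset.sum_product' S' S' (fun n m => ‖devEl S PiA m n‖ ^ 2)]
    exact this
  have hANonneg : 0 ≤ A :=
    Finset.sum_nonneg fun n _ => Finset.sum_nonneg fun m _ => habssq_nonneg _
  have hBNonneg : 0 ≤ B :=
    Finset.sum_nonneg fun n _ => Finset.sum_nonneg fun m _ => habssq_nonneg _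
  have hXle : X ≤ Real.sqrt A * Real.sqrt B := by
    rw [← Real.sqrt_mul hANonneg]
    rw [Real.le_sqrt hXnonneg (mul_nonneg hANonneg hBNonneg)]
    exact hCS
  -- |trace - c| ≤ X
  have habs_le : ‖(ρ * PiA).trace - (c:ℂ)‖ ≤ X := by
    rw [hTrEq, hX]
    rw [← Finset.sum_product' S' S' (fun n m => ρ n m * devEl S PiA m n)]
    refine le_trans (norm_sum_le _ _) (le_of_eq ?_)
    exact Finset.sum_congr rfl fun p _ => norm_mul _ _
  -- finish
  have hsqrtB : Real.sqrt B < ε * Real.sqrt S.card := by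
    have hBlt : B < ε ^ 2 * S.card := lt_of_le_of_lt hBband hband_lt
    have := Real.sqrt_lt_sqrt hBNonneg hBlt
    rwa [Real.sqrt_mul (sq_nonneg ε), Real.sqrt_sq hε.le] at this
  have hsqrtA : Real.sqrt A ≤ Real.sqrt T := Real.sqrt_le_sqrt hAT
  have hsqrtTpos : 0 < Real.sqrt T := Real.sqrt_pos.mpr hTpos
  calc ‖(ρ * PiA).trace - (c:ℂ)‖
      ≤ X := habs_le
    _ ≤ Real.sqrt A * Real.sqrt B := hXle
    _ ≤ Real.sqrt T * Real.sqrt B :=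
        mul_le_mul_of_nonneg_right hsqrtA (Real.sqrt_nonneg _)
    _ < Real.sqrt T * (ε * Real.sqrt S.card) :=
        (mul_lt_mul_iff_right₀ hsqrtTpos).mpr hsqrtB
    _ = ε * Real.sqrt (S.card * T) := by
        rw [Real.sqrt_mul (Nat.cast_nonneg _)]
        ring

end QET
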